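/- arXiv:1705.00547 — 6 statements merged into one kernel-verified Lean document; each statement's English description precedes it below -/
import Mathlib

section
/- Let ν* = −d + √(d² + k_p²/k_ω²) and suppose ν satisfies ν* ≤ ν < r⁻¹ or r⁻¹ < ν ≤ ν* (with ν ≠ r⁻¹). Then g(ν) < g(r⁻¹), where g(ν) = (k_p² + ν²k_ω²)/(2m(d+ν)). -/
theorem stmt_10 (m d kp kw rinv : ℝ) (hm : 0 < m) (hd : 0 < d) (hkp : 0 < kp)
    (hkw : 0 < kw) (hr : 0 < rinv)
    (g : ℝ → ℝ)
    (hg : ∀ ν : ℝ, g ν = (kp ^ 2 + ν ^ 2 * kw ^ 2) / (2 * m * (d + ν)))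
    (νs : ℝ) (hνs : νs = -d + Real.sqrt (d ^ 2 + kp ^ 2 / kw ^ 2))
    (ν : ℝ) (hν : (νs ≤ ν ∧ ν < rinv) ∨ (rinv < ν ∧ ν ≤ νs)) :
    g ν < g rinv := by
  set s := Real.sqrt (d ^ 2 + kp ^ 2 / kw ^ 2) with hsdef
  have harg : (0:ℝ) ≤ d ^ 2 + kp ^ 2 / kw ^ 2 := by positivity
  have hs2 : s ^ 2 = d ^ 2 + kp ^ 2 / kw ^ 2 := Real.sq_sqrt harg
  have hkp2 : kp ^ 2 = kw ^ 2 * (s ^ 2 - d ^ 2) := by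
    have hkw2 : (kw:ℝ) ^ 2 ≠ 0 := by positivity
    field_simp at hs2 ⊢
    nlinarith [hs2]
  have hs0 : 0 < s := by
    have : 0 < s ^ 2 := by rw [hs2]; positivity
    nlinarith [Real.sqrt_nonneg (d ^ 2 + kp ^ 2 / kw ^ 2)]
  rw [hg ν, hg rinv]
  rcases hν with ⟨h1, h2⟩ | ⟨h1, h2⟩
  · -- νs ≤ ν < rinv
    have hνpos : s ≤ d + ν := by linarith [hνs ▸ h1]
    have hdν : 0 < d + ν := by linarith
    have ha : 0 < 2 * m * (d + ν) := by nlinarith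
    have hb : 0 < 2 * m * (d + rinv) := by nlinarith
    rw [div_lt_div_iff₀ ha hb]
    have hkey : s ^ 2 < (d + ν) * (d + rinv) := by nlinarith
    nlinarith [hkp2, mul_pos (mul_pos hm (sub_pos.2 h2))
      (mul_pos (pow_pos hkw 2) (sub_pos.2 hkey))]
  · -- rinv < ν ≤ νs
    have hνle : d + ν ≤ s := by linarith [hνs ▸ h2]
    have hdν : 0 < d + ν := by linarith
    have ha : 0 < 2 * m * (d + ν) := by nlinarith
    have hb : 0 < 2 * m * (d + rinv) := by nlinarith
    rw [div_lt_div_iff₀ ha hb]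
    have hkey : (d + ν) * (d + rinv) < s ^ 2 := by nlinarith
    nlinarith [hkp2, mul_pos (mul_pos hm (sub_pos.2 h1))
      (mul_pos (pow_pos hkw 2) (sub_pos.2 hkey))]
end

section
/- Let α₁(ν) = (ν − r⁻¹)[(k_p² + ν²k_ω²)/(d+ν) − (ν + r⁻¹)k_ω²]. If (k_p/k_ω)² ≠ 2r⁻¹d + r⁻², then α₁(ν*) > 0 for ν* = −d + √(d² + k_p²/k_ω²); if (k_p/k_ω)² = 2r⁻¹d + r⁻², then α₁(ν) ≤ 0 for all ν > 0. -/
theorem stmt_11 (d kp kw rinv : ℝ) (hd : 0 < d) (hkp : 0 < kp) (hkw : 0 < kw)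
    (hr : 0 < rinv)
    (α₁ : ℝ → ℝ)
    (hα₁ : ∀ ν : ℝ, α₁ ν =
      (ν - rinv) * ((kp ^ 2 + ν ^ 2 * kw ^ 2) / (d + ν) - (ν + rinv) * kw ^ 2))
    (νs : ℝ) (hνs : νs = -d + Real.sqrt (d ^ 2 + kp ^ 2 / kw ^ 2)) :
    ((kp / kw) ^ 2 ≠ 2 * rinv * d + rinv ^ 2 → 0 < α₁ νs) ∧
      ((kp / kw) ^ 2 = 2 * rinv * d + rinv ^ 2 → ∀ ν : ℝ, 0 < ν → α₁ ν ≤ 0) := by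
  have hkw2 : (0:ℝ) < kw ^ 2 := by positivity
  set s := Real.sqrt (d ^ 2 + kp ^ 2 / kw ^ 2) with hs
  have harg : (0:ℝ) < d ^ 2 + kp ^ 2 / kw ^ 2 := by positivity
  have hs2 : s ^ 2 = d ^ 2 + kp ^ 2 / kw ^ 2 := Real.sq_sqrt harg.le
  have hspos : 0 < s := Real.sqrt_pos.mpr harg
  have hkp2 : kp ^ 2 = (s ^ 2 - d ^ 2) * kw ^ 2 := by
    field_simp at hs2; linarith
  have hds : d + νs = s := by rw [hνs]; ring
  constructor
  · intro hne
    have hval : α₁ νs = kw ^ 2 * (νs - rinv) ^ 2 := by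
      rw [hα₁, hds]
      have hνs' : νs = s - d := by rw [hνs]; ring
      have hnum : kp ^ 2 + νs ^ 2 * kw ^ 2 = 2 * νs * kw ^ 2 * s := by
        rw [hνs', hkp2]; ring
      rw [hnum, mul_div_assoc, div_self hspos.ne', mul_one]
      ring
    rw [hval]
    have hne' : νs ≠ rinv := by
      intro h
      apply hne
      have : s = d + rinv := by rw [← hds, h]
      have : s ^ 2 = (d + rinv) ^ 2 := by rw [this]
      rw [hs2] at this
      rw [div_pow]
      nlinarith
    have hnz : νs - rinv ≠ 0 := sub_ne_zero.mpr hne'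
    have h2 : (0:ℝ) < (νs - rinv) ^ 2 := by positivity
    exact mul_pos hkw2 h2
  · intro hc ν hν
    have hkp2' : kp ^ 2 = (2 * rinv * d + rinv ^ 2) * kw ^ 2 := by
      rw [div_pow] at hc
      field_simp at hc
      linarith
    have hdν : (0:ℝ) < d + ν := by linarith
    have hval : α₁ ν = -((ν - rinv) ^ 2 * (d + rinv) * kw ^ 2) / (d + ν) := by
      rw [hα₁, hkp2']
      field_simp
      ring
    rw [hval]
    apply div_nonpos_of_nonpos_of_nonneg _ hdν.le
    have h3 : (0:ℝ) ≤ (ν - rinv) ^ 2 * (d + rinv) * kw ^ 2 := by positivity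
    linarith
end

section
/- Assume d = 0, m > 0, a > 0, λ ≥ 0. Then τ_rob = arccos(0)/ω_n(a²/(2m²)) satisfies τ_rob ≥ mπ/(2√(a² + 2mλ)), where ω_n(x) = √(√(x² + 2xλ/m) + x + λ/m). -/
theorem stmt_14 (m a lam : ℝ) (hm : 0 < m) (ha : 0 < a) (hlam : 0 ≤ lam)
    (ωn : ℝ → ℝ)
    (hωn : ∀ x : ℝ, ωn x =
      Real.sqrt (Real.sqrt (x ^ 2 + 2 * x * lam / m) + x + lam / m))
    (τrob : ℝ) (hτ : τrob = Real.arccos 0 / ωn (a ^ 2 / (2 * m ^ 2))) :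
    τrob ≥ m * Real.pi / (2 * Real.sqrt (a ^ 2 + 2 * m * lam)) := by
  set x := a ^ 2 / (2 * m ^ 2) with hxdef
  have hx : (0:ℝ) < x := by positivity
  have hS : 0 < Real.sqrt (a ^ 2 + 2 * m * lam) := Real.sqrt_pos.2 (by positivity)
  have hW : 0 < ωn x := by
    rw [hωn]
    exact Real.sqrt_pos.2 (by positivity)
  have h1 : Real.sqrt (x ^ 2 + 2 * x * lam / m) ≤ x + lam / m := by
    have hle : x ^ 2 + 2 * x * lam / m ≤ (x + lam / m) ^ 2 := by
      have : (x + lam / m) ^ 2 = x ^ 2 + 2 * x * lam / m + (lam / m) ^ 2 := by ring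
      nlinarith [sq_nonneg (lam / m)]
    calc Real.sqrt (x ^ 2 + 2 * x * lam / m) ≤ Real.sqrt ((x + lam / m) ^ 2) :=
          Real.sqrt_le_sqrt hle
      _ = x + lam / m := Real.sqrt_sq (by positivity)
  have h2 : ωn x ≤ Real.sqrt (a ^ 2 + 2 * m * lam) / m := by
    rw [hωn]
    have heq : (a ^ 2 + 2 * m * lam) / m ^ 2 = 2 * x + 2 * (lam / m) := by
      field_simp [hxdef]
      rw [hxdef]; field_simp
    have hT : Real.sqrt (x ^ 2 + 2 * x * lam / m) + x + lam / m
        ≤ (a ^ 2 + 2 * m * lam) / m ^ 2 := by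
      rw [heq]; linarith
    calc Real.sqrt (Real.sqrt (x ^ 2 + 2 * x * lam / m) + x + lam / m)
        ≤ Real.sqrt ((a ^ 2 + 2 * m * lam) / m ^ 2) := Real.sqrt_le_sqrt hT
      _ = Real.sqrt (a ^ 2 + 2 * m * lam) / Real.sqrt (m ^ 2) :=
          Real.sqrt_div (by positivity) _
      _ = Real.sqrt (a ^ 2 + 2 * m * lam) / m := by
          rw [Real.sqrt_sq hm.le]
  rw [hτ, Real.arccos_zero, ge_iff_le, div_le_div_iff₀ (by positivity) hW]
  have h3 : m * ωn x ≤ Real.sqrt (a ^ 2 + 2 * m * lam) := by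
    rw [div_eq_inv_mul] at h2
    calc m * ωn x ≤ m * ((m)⁻¹ * Real.sqrt (a ^ 2 + 2 * m * lam)) := by
          exact mul_le_mul_of_nonneg_left h2 hm.le
      _ = Real.sqrt (a ^ 2 + 2 * m * lam) := by field_simp
  nlinarith [Real.pi_pos, hS, hW]
end

section
/- For the 2×2 system with A = [[−(d+ν)/m, 1/m], [δ(ν − r⁻¹), −δ]], C = [1, 0], and B = [[k_p/m, −νk_ω/m], [0, δ(ν − r⁻¹)k_ω]], the solution Q of the Lyapunov equation AᵀQ + QA = −CᵀC yields tr(BᵀQB) = (k_p² + ν²k_ω²)/(2m(d+ν)) + δ²(ν − r⁻¹)[(k_p² + ν²k_ω²)/(d+ν) − (ν + r⁻¹)k_ω²] / (2(d+ν+mδ)δ(d+r⁻¹)), provided A is Hurwitz. -/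
open Matrix

theorem stmt_16 (m d ν δ kp kw rinv : ℝ) (hm : 0 < m) (hd : 0 < d) (hν : 0 < ν)
    (hδ : 0 < δ) (hkp : 0 < kp) (hkw : 0 < kw) (hr : 0 < rinv)
    (A B : Matrix (Fin 2) (Fin 2) ℝ) (C : Matrix (Fin 1) (Fin 2) ℝ)
    (hA : A = !![-(d + ν) / m, 1 / m; δ * (ν - rinv), -δ])
    (hB : B = !![kp / m, -ν * kw / m; 0, δ * (ν - rinv) * kw])
    (hC : C = !![1, 0])
    (hHurwitz : ∀ μ : ℂ, (A.map (Complex.ofReal)).charpoly.IsRoot μ → μ.re < 0)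
    (Q : Matrix (Fin 2) (Fin 2) ℝ)
    (hQ : Aᵀ * Q + Q * A = -(Cᵀ * C)) :
    (Bᵀ * Q * B).trace =
      (kp ^ 2 + ν ^ 2 * kw ^ 2) / (2 * m * (d + ν)) +
        δ ^ 2 * (ν - rinv) *
            ((kp ^ 2 + ν ^ 2 * kw ^ 2) / (d + ν) - (ν + rinv) * kw ^ 2) /
          (2 * (d + ν + m * δ) * δ * (d + rinv)) := by
  subst hA hB hC
  have h00 := congrFun (congrFun hQ 0) 0
  have h01 := congrFun (congrFun hQ 0) 1
  have h10 := congrFun (congrFun hQ 1) 0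
  have h11 := congrFun (congrFun hQ 1) 1
  simp [Matrix.mul_apply, Fin.sum_univ_two, Matrix.add_apply, Matrix.neg_apply,
    Matrix.transpose_apply, Matrix.vecHead, Matrix.vecTail] at h00 h01 h10 h11
  have hm' : m ≠ 0 := hm.ne'
  field_simp at h00 h01 h10 h11
  have hsum : (Q 0 1 + Q 1 0) * ((d+rinv)*((d+ν)+m*δ)) = m := by
    linear_combination -((d+ν)*h01) - (d+ν)*h10 - (d+ν)*(ν-rinv)*h11 - h00
  have ha : Q 0 0 * (2*((d+rinv)*((d+ν)+m*δ))) = m*((d+rinv)+m*δ) := by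
    linear_combination -(m*δ*(ν-rinv))*h01 - (m*δ*(ν-rinv))*h10 -
      (m*δ*(ν-rinv)^2)*h11 - ((d+rinv)+m*δ)*h00
  have he : Q 1 1 * (2*m*δ*((d+rinv)*((d+ν)+m*δ))) = m := by
    linear_combination -((d+ν)*h01) - (d+ν)*h10 -
      ((d+ν)*(ν-rinv) + (d+rinv)*((d+ν)+m*δ))*h11 - h00
  have hD : ((d+rinv)*((d+ν)+m*δ)) ≠ 0 := by positivity
  have ha' : Q 0 0 = m*((d+rinv)+m*δ)/(2*((d+rinv)*((d+ν)+m*δ))) := by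
    rw [eq_div_iff (by positivity)]; linear_combination ha
  have he' : Q 1 1 = 1/(2*δ*((d+rinv)*((d+ν)+m*δ))) := by
    rw [eq_div_iff (by positivity : (0:ℝ) < 2*δ*((d+rinv)*((d+ν)+m*δ))).ne']
    apply mul_left_cancel₀ hm'
    linear_combination he
  have hb' : Q 0 1 = m/((d+rinv)*((d+ν)+m*δ)) - Q 1 0 := by
    rw [eq_sub_iff_add_eq, eq_div_iff hD]; linear_combination hsum
  simp [Matrix.trace_fin_two, Matrix.mul_apply, Fin.sum_univ_two,
    Matrix.transpose_apply, Matrix.vecHead, Matrix.vecTail]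
  rw [ha', hb', he']
  field_simp
  ring
end

section
/- Let Q be the symmetric 3×3 solution of AᵀQ + QA = −CᵀC with A = [[0,1,0],[−λ/m, −(d+ν)/m, 1/m],[0, δ(ν−r⁻¹), −δ]] and C = [0,1,0], where λ > 0. Then Q₁₂ = 0, Q₂₃ = mδQ₃₃, Q₁₃ = −λQ₃₃, and Q₃₃ = 1/(2[(d+ν+mδ)δ(d+r⁻¹) + (d+ν)λ]), provided A is Hurwitz. -/
open Matrix

theorem stmt_17 (m d ν δ rinv lam : ℝ) (hm : 0 < m) (hd : 0 < d) (hν : 0 < ν)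
    (hδ : 0 < δ) (hr : 0 < rinv) (hlam : 0 < lam)
    (A : Matrix (Fin 3) (Fin 3) ℝ) (C : Matrix (Fin 1) (Fin 3) ℝ)
    (hA : A = !![0, 1, 0; -lam / m, -(d + ν) / m, 1 / m; 0, δ * (ν - rinv), -δ])
    (hC : C = !![0, 1, 0])
    (hHurwitz : ∀ μ : ℂ, (A.map (Complex.ofReal)).charpoly.IsRoot μ → μ.re < 0)
    (Q : Matrix (Fin 3) (Fin 3) ℝ) (hQsymm : Q.IsSymm)
    (hQ : Aᵀ * Q + Q * A = -(Cᵀ * C)) :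
    Q 0 1 = 0 ∧ Q 1 2 = m * δ * Q 2 2 ∧ Q 0 2 = -lam * Q 2 2 ∧
      Q 2 2 = 1 / (2 * ((d + ν + m * δ) * δ * (d + rinv) + (d + ν) * lam)) := by
  subst hA hC
  have hs10 : Q 1 0 = Q 0 1 := (hQsymm.apply 1 0).symm
  have hs20 : Q 2 0 = Q 0 2 := (hQsymm.apply 2 0).symm
  have hs21 : Q 2 1 = Q 1 2 := (hQsymm.apply 2 1).symm
  have e := fun i j => congrFun (congrFun hQ i) j
  have e00 := e 0 0
  have e02 := e 0 2
  have e11 := e 1 1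
  have e12 := e 1 2
  have e22 := e 2 2
  simp [Matrix.add_apply, Matrix.mul_apply, Matrix.neg_apply,
    Matrix.transpose_apply, Fin.sum_univ_three, Fin.sum_univ_one, Matrix.vecHead, Matrix.vecTail] at e00 e02 e11 e12 e22
  rw [hs10] at e00 e11
  rw [hs21] at e11 e22
  have hm' := hm.ne'
  have hδ' := hδ.ne'
  field_simp at e00 e02 e11 e12 e22
  have h12 : Q 0 1 = 0 := by
    have h2 : (2 * lam * m) * Q 0 1 = 0 := by linear_combination -m * e00
    exact (mul_eq_zero.1 h2).resolve_left (by positivity)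
  have h23 : Q 1 2 = m * δ * Q 2 2 := by
    have h2 : 2 * (Q 1 2 - m * δ * Q 2 2) = 0 := by linear_combination e22
    linarith
  have h13 : Q 0 2 = -lam * Q 2 2 := by
    have h2 : (δ * m ^ 2) * (Q 0 2 + lam * Q 2 2) = 0 := by
      linear_combination -m * e02 + m * h12 - lam * m * h23
    have h3 := (mul_eq_zero.1 h2).resolve_left (by positivity)
    linarith
  have hq11 : Q 1 1 = m * Q 2 2 * (δ * (d + rinv) + m * δ ^ 2 + lam) := by
    linear_combination e12 - m * h13 + (ν + d + δ * m) * h23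
  refine ⟨h12, h23, h13, ?_⟩
  have h2 : m * (2 * ((d + ν + m * δ) * δ * (d + rinv) + (d + ν) * lam) * Q 2 2 - 1) = 0 := by
    linear_combination -e11 + 2 * m * h12 - 2 * (ν + d) * hq11 + 2 * δ * (ν - rinv) * m * h23
  have h3 := (mul_eq_zero.1 h2).resolve_left hm'
  have hD : (0:ℝ) < 2 * ((d + ν + m * δ) * δ * (d + rinv) + (d + ν) * lam) := by positivity
  rw [eq_div_iff hD.ne']
  linarith
end

section
/- Let a > d > 0 and define φ ∈ (π/2, π) by cos(π − φ) = d/a, i.e., φ = arccos(−d/a). Then for the transfer function H(jω) = jωa/(−mω² + djω + λ) with m > 0, λ ≥ 0, the Nyquist plot at the gain-crossover frequency ω̄ (the largest ω > 0 with |H(jω̄)| = 1) has phase margin φ: arg H(jω̄) = −π + φ. -/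
/-- The gain condition as a real equation. -/
lemma abs_eq_one_iff_aux (m a d lam : ℝ) (hm : 0 < m) (hd : 0 < d) (ha : d < a)
    (ω : ℝ) (hω : 0 < ω) :
    ‖(Complex.I * ω * a) / (-(m : ℂ) * ω ^ 2 + d * Complex.I * ω + lam)‖ = 1
      ↔ a ^ 2 * ω ^ 2 = (lam - m * ω ^ 2) ^ 2 + d ^ 2 * ω ^ 2 := by
  set D : ℂ := -(m : ℂ) * ω ^ 2 + d * Complex.I * ω + lam with hDdef
  have hre : D.re = lam - m * ω ^ 2 := by simp [hDdef, ← Complex.ofReal_pow]; ring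
  have him : D.im = d * ω := by simp [hDdef, ← Complex.ofReal_pow]
  have hD0 : D ≠ 0 := by
    intro h
    have := congrArg Complex.im h
    rw [him] at this
    simp at this
    rcases this with h | h
    · exact absurd h (ne_of_gt hd)
    · exact absurd h (ne_of_gt hω)
  have habsD : 0 < ‖D‖ := by
    simpa [norm_pos_iff] using hD0
  have hnum : ‖Complex.I * ω * a‖ = a * ω := by
    rw [norm_mul, norm_mul, Complex.norm_I, Complex.norm_real, Complex.norm_real, Real.norm_eq_abs, Real.norm_eq_abs, abs_of_pos hω, abs_of_pos (hd.trans ha)]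
    ring
  rw [norm_div, hnum, div_eq_one_iff_eq (ne_of_gt habsD)]
  constructor
  · intro h
    have h2 : (a * ω) ^ 2 = ‖D‖ ^ 2 := by rw [h]
    rw [Complex.sq_norm, Complex.normSq_apply, hre, him] at h2
    nlinarith [h2]
  · intro h
    have h2 : (a * ω) ^ 2 = ‖D‖ ^ 2 := by
      rw [Complex.sq_norm, Complex.normSq_apply, hre, him]
      nlinarith [h]
    have haω : 0 < a * ω := mul_pos (hd.trans ha) hω
    nlinarith [h2, habsD, haω]

theorem stmt_18 (m a d lam : ℝ) (hm : 0 < m) (hd : 0 < d) (ha : d < a)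
    (hlam : 0 ≤ lam)
    (H : ℝ → ℂ)
    (hH : ∀ ω : ℝ, H ω =
      (Complex.I * ω * a) / (-(m : ℂ) * ω ^ 2 + d * Complex.I * ω + lam))
    (ωb : ℝ) (hωb : 0 < ωb) (hgain : ‖H ωb‖ = 1)
    (hmax : ∀ ω : ℝ, 0 < ω → ‖H ω‖ = 1 → ω ≤ ωb) :
    (H ωb).arg = -Real.pi + Real.arccos (-d / a) := by
  have ha0 : 0 < a := hd.trans ha
  -- the gain equation at ωb
  have hE : a ^ 2 * ωb ^ 2 = (lam - m * ωb ^ 2) ^ 2 + d ^ 2 * ωb ^ 2 := by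
    rw [← abs_eq_one_iff_aux m a d lam hm hd ha ωb hωb, ← hH]
    exact hgain
  set r : ℝ := lam - m * ωb ^ 2 with hr
  -- r < 0
  have hrneg : r < 0 := by
    rcases lt_trichotomy r 0 with h | h | h
    · exact h
    · exfalso
      have hω2 : 0 < ωb ^ 2 := by positivity
      rw [h] at hE
      nlinarith [hE, mul_pos (mul_pos (sub_pos.2 ha) (show (0:ℝ) < a + d by linarith)) hω2]
    · exfalso
      -- lam > m ωb² > 0; the other crossover is ω₂ = lam/(m ωb) > ωb
      have hlam' : 0 < lam := by nlinarith [sq_nonneg ωb]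
      set ω₂ : ℝ := lam / (m * ωb) with hω₂def
      have hω₂pos : 0 < ω₂ := div_pos hlam' (mul_pos hm hωb)
      have hgt : ωb < ω₂ := by
        rw [hω₂def, lt_div_iff₀ (mul_pos hm hωb)]
        nlinarith [h]
      have hE0 : a ^ 2 * ωb ^ 2 = (lam - m * ωb ^ 2) ^ 2 + d ^ 2 * ωb ^ 2 := by
        rw [← hr]; exact hE
      have hE2 : a ^ 2 * ω₂ ^ 2 = (lam - m * ω₂ ^ 2) ^ 2 + d ^ 2 * ω₂ ^ 2 := by
        rw [hω₂def]
        field_simp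
        linear_combination hE0
      have habs2 : ‖H ω₂‖ = 1 := by
        rw [hH]
        exact (abs_eq_one_iff_aux m a d lam hm hd ha ω₂ hω₂pos).2 hE2
      exact absurd (hmax ω₂ hω₂pos habs2) (not_le.2 hgt)
  -- explicit form of H ωb
  set D : ℂ := -(m : ℂ) * ωb ^ 2 + d * Complex.I * ωb + lam with hDdef
  have hre : D.re = r := by simp [hDdef, hr, ← Complex.ofReal_pow]; ring
  have him : D.im = d * ωb := by simp [hDdef, ← Complex.ofReal_pow]
  have hD0 : D ≠ 0 := by
    intro hz
    have := congrArg Complex.im hz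
    rw [him] at this
    simp at this
    rcases this with h' | h'
    · exact absurd h' (ne_of_gt hd)
    · exact absurd h' (ne_of_gt hωb)
  have hDeq : D = (r : ℂ) + (d * ωb : ℝ) * Complex.I := by
    apply Complex.ext <;> simp [hre, him]
  have hHval : H ωb = ((d / a : ℝ) : ℂ) + ((r / (a * ωb) : ℝ) : ℂ) * Complex.I := by
    rw [hH, ← hDdef, hDeq, div_eq_iff]
    · push_cast
      rw [hr]
      have haω : (a : ℂ) ≠ 0 := by exact_mod_cast ne_of_gt ha0
      have hωc : (ωb : ℂ) ≠ 0 := by exact_mod_cast ne_of_gt hωb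
      field_simp
      ring_nf
      rw [Complex.I_sq]
      have hEc : (a : ℂ) ^ 2 * ωb ^ 2 = ((lam : ℂ) - m * ωb ^ 2) ^ 2 + d ^ 2 * ωb ^ 2 := by
        exact_mod_cast hE
      ring_nf
      ring_nf at hEc
      push_cast
      linear_combination Complex.I * hEc
    · rw [← hDeq]; exact hD0
  -- identify with cos θ + sin θ I for θ = -arccos (d/a)
  set θ : ℝ := -Real.arccos (d / a) with hθdef
  have hda0 : 0 < d / a := div_pos hd ha0
  have hda1 : d / a < 1 := (div_lt_one ha0).2 ha
  have hcos : Real.cos θ = d / a := by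
    rw [hθdef, Real.cos_neg, Real.cos_arccos (by linarith) (by linarith)]
  have hsin : Real.sin θ = r / (a * ωb) := by
    rw [hθdef, Real.sin_neg, Real.sin_arccos]
    have hsq : 1 - (d / a) ^ 2 = (-(r / (a * ωb))) ^ 2 := by
      field_simp
      nlinarith [hE]
    have hneg : r / (a * ωb) < 0 := div_neg_of_neg_of_pos hrneg (mul_pos ha0 hωb)
    rw [hsq, Real.sqrt_sq (by linarith)]
    ring
  have hmem : θ ∈ Set.Ioc (-Real.pi) Real.pi := by
    constructor
    · rw [hθdef]
      have h1 : Real.arccos (d / a) < Real.pi / 2 := Real.arccos_lt_pi_div_two.2 hda0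
      linarith [Real.pi_pos]
    · rw [hθdef]
      have := Real.arccos_nonneg (d / a)
      linarith [Real.pi_pos]
  have harg : (H ωb).arg = θ := by
    rw [hHval, ← hcos, ← hsin, Complex.ofReal_cos, Complex.ofReal_sin]
    exact Complex.arg_cos_add_sin_mul_I hmem
  rw [harg, hθdef]
  rw [show -d / a = -(d / a) by ring, Real.arccos_neg]
  ring
end
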